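/- arXiv:1007.0076 — 2 statements merged into one kernel-verified Lean document; each statement's English description precedes it below -/
import Mathlib

section
/- Let Q be an n×n Hermitian matrix such that det(Q + H) ≥ 0 for every positive semidefinite Hermitian n×n matrix H. Then Q is positive semidefinite. -/
open scoped ComplexOrder

theorem stmt_0 (n : ℕ) (Q : Matrix (Fin n) (Fin n) ℂ) (hQ : Q.IsHermitian)
    (h : ∀ H : Matrix (Fin n) (Fin n) ℂ, H.PosSemidef → 0 ≤ ((Q + H).det).re) :
    Q.PosSemidef := by
  by_contra hc
  obtain ⟨k, hk⟩ : ∃ k, hQ.eigenvalues k < 0 := by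
    by_contra hk
    push_neg at hk
    exact hc (hQ.posSemidef_iff_eigenvalues_nonneg.mpr hk)
  set U : Matrix (Fin n) (Fin n) ℂ := (hQ.eigenvectorUnitary : Matrix (Fin n) (Fin n) ℂ) with hU
  set d : Fin n → ℝ := fun i => if i = k then 0 else 1 + |hQ.eigenvalues i| with hd
  set H : Matrix (Fin n) (Fin n) ℂ := U * Matrix.diagonal (Complex.ofReal ∘ d) * star U with hHdef
  have hH : H.PosSemidef := by
    refine (Matrix.posSemidef_diagonal_iff.mpr ?_).mul_mul_conjTranspose_same _
    intro i
    simp only [Function.comp_apply]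
    rw [Complex.zero_le_real]
    dsimp [d]
    split <;> positivity
  have key : Q + H = U * Matrix.diagonal (fun i => ((hQ.eigenvalues i + d i : ℝ) : ℂ)) * star U := by
    conv_lhs => rw [hQ.spectral_theorem, Unitary.conjStarAlgAut_apply]
    rw [hHdef, ← add_mul, ← mul_add]
    congr 2
    rw [Matrix.diagonal_add]
    ext i
    simp [Complex.ofReal_add]
  have hdet : ((Q + H).det).re = ∏ i, (hQ.eigenvalues i + d i) := by
    rw [key, Matrix.det_mul_right_comm]
    have h1 : U * star U = 1 := (Matrix.mem_unitaryGroup_iff).mp hQ.eigenvectorUnitary.2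
    rw [h1, one_mul, Matrix.det_diagonal]
    rw [← Complex.ofReal_prod, Complex.ofReal_re]
  have hneg : ∏ i, (hQ.eigenvalues i + d i) < 0 := by
    rw [← Finset.prod_erase_mul _ _ (Finset.mem_univ k)]
    have h1 : 0 < ∏ i ∈ Finset.univ.erase k, (hQ.eigenvalues i + d i) := by
      apply Finset.prod_pos
      intro i hi
      have : i ≠ k := Finset.ne_of_mem_erase hi
      simp only [hd, if_neg this]
      have := abs_nonneg (hQ.eigenvalues i)
      have := neg_abs_le (hQ.eigenvalues i)
      linarith
    have h2 : hQ.eigenvalues k + d k < 0 := by simp [hd, hk]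
    exact mul_neg_of_pos_of_neg h1 h2
  have := h H hH
  rw [hdet] at this
  linarith
end

section
/- For any positive semidefinite Hermitian n×n matrix Q, det(Q)^{1/n} = inf { tr(HQ) : H Hermitian positive definite with det(H) = n^{-n} }. -/
open scoped ComplexOrder
open Matrix
open scoped MatrixOrder

lemma trace_eq_sum_eigen {m : ℕ} {A : Matrix (Fin m) (Fin m) ℂ} (hA : A.IsHermitian) :
    A.trace = ∑ i, (hA.eigenvalues i : ℂ) := by
  conv_lhs => rw [hA.spectral_theorem]
  rw [Unitary.conjStarAlgAut_apply, Matrix.trace_mul_cycle]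
  rw [Matrix.mem_unitaryGroup_iff'.mp hA.eigenvectorUnitary.2, Matrix.one_mul,
    Matrix.trace_diagonal]
  rfl

lemma posDef_rsmul {m : ℕ} {M : Matrix (Fin m) (Fin m) ℂ} (hM : M.PosDef) {c : ℝ}
    (hc : 0 < c) : ((c : ℂ) • M).PosDef := by
  refine ⟨?_, fun x hx => ?_⟩
  · unfold Matrix.IsHermitian
    rw [Matrix.conjTranspose_smul, hM.1, Complex.star_def, Complex.conj_ofReal]
  · exact (hM.smul (Complex.zero_lt_real.mpr hc)).2 hx

lemma psd_det_re {m : ℕ} {A : Matrix (Fin m) (Fin m) ℂ} (hA : A.PosSemidef) :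
    A.det = (A.det.re : ℂ) ∧ 0 ≤ A.det.re := by
  have h : A.det = ((∏ i, hA.1.eigenvalues i : ℝ) : ℂ) := by
    rw [hA.1.det_eq_prod_eigenvalues]; push_cast; rfl
  rw [h]
  simp only [Complex.ofReal_re, true_and]
  exact Finset.prod_nonneg fun i _ => hA.eigenvalues_nonneg i

lemma lower_bound {n : ℕ} (hn : 0 < n) {Q H : Matrix (Fin n) (Fin n) ℂ} (hQ : Q.PosSemidef)
    (hH : H.PosDef) (hdet : H.det = (((n : ℂ)) ^ (n : ℕ))⁻¹) :
    (Q.det.re) ^ ((1 : ℝ) / n) ≤ ((H * Q).trace).re := by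
  have npos : (0 : ℝ) < n := Nat.cast_pos.mpr hn
  set S := CFC.sqrt H with hSdef
  have hS : S.PosSemidef := (CFC.sqrt_nonneg H).posSemidef
  have hSS : S * S = H := CFC.sqrt_mul_sqrt_self H hH.posSemidef.nonneg
  have hM : (S * Q * S).PosSemidef := by
    have := hQ.mul_mul_conjTranspose_same (B := S)
    rwa [hS.1] at this
  set μ := hM.1.eigenvalues with hμdef
  have hμ0 : ∀ i, 0 ≤ μ i := hM.eigenvalues_nonneg
  have htr : ((H * Q).trace).re = ∑ i, μ i := by
    have h1 : (S * Q * S).trace = (H * Q).trace := by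
      rw [Matrix.trace_mul_cycle, hSS]
    rw [← h1, trace_eq_sum_eigen hM.1, ← Complex.ofReal_sum, Complex.ofReal_re]
  have hd := psd_det_re hQ
  have hprod : ∏ i, μ i = (((n : ℝ)) ^ (n : ℕ))⁻¹ * Q.det.re := by
    have hdM : ((S * Q * S).det : ℂ) = (((n : ℂ)) ^ (n : ℕ))⁻¹ * Q.det := by
      have h2 : S.det * S.det = H.det := by rw [← Matrix.det_mul, hSS]
      rw [Matrix.det_mul, Matrix.det_mul, ← hdet, ← h2]; ring
    have h4 : ((∏ i, μ i : ℝ) : ℂ) = (S * Q * S).det := by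
      rw [hM.1.det_eq_prod_eigenvalues]; push_cast; rfl
    have h3 : ((∏ i, μ i : ℝ) : ℂ) = ((((n : ℝ)) ^ (n : ℕ))⁻¹ * Q.det.re : ℝ) := by
      rw [h4, hdM, hd.1]; push_cast; simp
    exact_mod_cast h3
  have key := Real.geom_mean_le_arith_mean_weighted Finset.univ (fun _ => 1 / (n : ℝ)) μ
    (fun i _ => by positivity)
    (by simp only [Finset.sum_const, Finset.card_univ, Fintype.card_fin, nsmul_eq_mul]
        field_simp)
    (fun i _ => hμ0 i)
  rw [Real.finset_prod_rpow Finset.univ μ (fun i _ => hμ0 i), hprod,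
    Real.mul_rpow (by positivity) hd.2] at key
  have hnn : ((((n : ℝ)) ^ (n : ℕ))⁻¹) ^ ((1 : ℝ) / n) = (n : ℝ)⁻¹ := by
    rw [← Real.rpow_natCast (n : ℝ) n, ← Real.rpow_neg npos.le,
      ← Real.rpow_mul npos.le]
    rw [show -(n : ℝ) * (1 / n) = -1 by field_simp]
    exact Real.rpow_neg_one _
  rw [hnn, ← Finset.mul_sum] at key
  rw [htr]
  rw [one_div] at key ⊢
  exact le_of_mul_le_mul_left key (by positivity)

lemma psd_trace_re_nonneg {m : ℕ} {A : Matrix (Fin m) (Fin m) ℂ} (hA : A.PosSemidef) :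
    0 ≤ A.trace.re := by
  rw [trace_eq_sum_eigen hA.1, ← Complex.ofReal_sum, Complex.ofReal_re]
  exact Finset.sum_nonneg fun i _ => hA.eigenvalues_nonneg i

lemma elt_exists {n : ℕ} (hn : 0 < n) {Q : Matrix (Fin n) (Fin n) ℂ} (hQ : Q.PosSemidef)
    {δ : ℝ} (hδ : 0 < δ) :
    ∃ H : Matrix (Fin n) (Fin n) ℂ, H.PosDef ∧ H.det = (((n : ℂ)) ^ (n : ℕ))⁻¹ ∧
      ((H * Q).trace).re ≤ (((Q + (δ : ℂ) • 1).det).re) ^ ((1 : ℝ) / n) := by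
  have npos : (0 : ℝ) < n := Nat.cast_pos.mpr hn
  set P := Q + (δ : ℂ) • 1 with hPdef
  have h1 : ((δ : ℂ) • (1 : Matrix (Fin n) (Fin n) ℂ)).PosDef := by
    rw [Matrix.smul_one_eq_diagonal]
    exact Matrix.PosDef.diagonal fun i => Complex.zero_lt_real.mpr hδ
  have hP : P.PosDef := Matrix.PosDef.posSemidef_add hQ h1
  have hPre := psd_det_re hP.posSemidef
  have hre : 0 < P.det.re := by
    have := hP.det_pos
    rw [hPre.1] at this
    exact Complex.zero_lt_real.mp this
  have hdetne : P.det ≠ 0 := by rw [hPre.1]; exact_mod_cast hre.ne'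
  set c : ℝ := P.det.re ^ ((1 : ℝ) / n) / n with hcdef
  have hc : 0 < c := by positivity
  refine ⟨(c : ℂ) • P⁻¹, posDef_rsmul hP.inv hc, ?_, ?_⟩
  · rw [Matrix.det_smul, Matrix.det_nonsing_inv, Ring.inverse_eq_inv, hPre.1, Fintype.card_fin]
    have hcn : (c : ℝ) ^ n = P.det.re / (n : ℝ) ^ n := by
      rw [hcdef, div_pow, ← Real.rpow_natCast (P.det.re ^ ((1 : ℝ) / n)) n,
        ← Real.rpow_mul hre.le, one_div, inv_mul_cancel₀ npos.ne', Real.rpow_one]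
    have h2 : ((c : ℂ)) ^ n = ((P.det.re / (n : ℝ) ^ n : ℝ) : ℂ) := by
      rw [← hcn]; push_cast; ring
    rw [h2]
    have hne : ((P.det.re : ℝ) : ℂ) ≠ 0 := Complex.ofReal_ne_zero.mpr hre.ne'
    have hnne : ((n : ℂ)) ^ n ≠ 0 := pow_ne_zero _ (Nat.cast_ne_zero.mpr hn.ne')
    push_cast
    field_simp
  · have hPinv : P⁻¹ * P = 1 := Matrix.nonsing_inv_mul P (isUnit_iff_ne_zero.mpr hdetne)
    have hQP : P⁻¹ * Q = 1 - (δ : ℂ) • P⁻¹ := by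
      have hQeq : Q = P - (δ : ℂ) • 1 := by rw [hPdef, add_sub_cancel_right]
      rw [hQeq, Matrix.mul_sub, hPinv, Matrix.mul_smul, Matrix.mul_one]
    have htr : (((c : ℂ) • P⁻¹ * Q).trace).re = c * ((n : ℝ) - δ * (P⁻¹.trace).re) := by
      rw [Matrix.smul_mul, Matrix.trace_smul, hQP]
      rw [Matrix.trace_sub, Matrix.trace_smul, Matrix.trace_one]
      simp only [smul_eq_mul, Complex.re_ofReal_mul, Complex.sub_re, Complex.natCast_re,
        Complex.mul_re, Complex.ofReal_re, Complex.ofReal_im, zero_mul, sub_zero,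
        Fintype.card_fin]
    rw [htr]
    have hPinvtr : 0 ≤ (P⁻¹.trace).re := psd_trace_re_nonneg hP.inv.posSemidef
    have : c * ((n : ℝ) - δ * (P⁻¹.trace).re) ≤ c * n := by
      apply mul_le_mul_of_nonneg_left _ hc.le
      nlinarith
    refine this.trans ?_
    rw [hcdef, div_mul_cancel₀ _ npos.ne']

theorem stmt_1 (n : ℕ) (hn : 0 < n) (Q : Matrix (Fin n) (Fin n) ℂ) (hQ : Q.PosSemidef) :
    (Q.det.re) ^ ((1 : ℝ) / n) =
      sInf { x : ℝ | ∃ H : Matrix (Fin n) (Fin n) ℂ, H.PosDef ∧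
        H.det = (((n : ℂ)) ^ (n : ℕ))⁻¹ ∧ x = ((H * Q).trace).re } := by
  set Sset := { x : ℝ | ∃ H : Matrix (Fin n) (Fin n) ℂ, H.PosDef ∧
        H.det = (((n : ℂ)) ^ (n : ℕ))⁻¹ ∧ x = ((H * Q).trace).re } with hSdef
  obtain ⟨H₁, hH₁, hH₁det, _⟩ := elt_exists hn hQ one_pos
  have hne : Sset.Nonempty := ⟨((H₁ * Q).trace).re, H₁, hH₁, hH₁det, rfl⟩
  have hbdd : BddBelow Sset := by
    refine ⟨(Q.det.re) ^ ((1 : ℝ) / n), fun x hx => ?_⟩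
    obtain ⟨H, h1, h2, h3⟩ := hx
    rw [h3]
    exact lower_bound hn hQ h1 h2
  refine le_antisymm (le_csInf hne fun x hx => ?_) ?_
  · obtain ⟨H, h1, h2, h3⟩ := hx
    rw [h3]
    exact lower_bound hn hQ h1 h2
  · set f : ℝ → ℝ := fun δ => (((Q + (δ : ℂ) • 1).det).re) ^ ((1 : ℝ) / n) with hfdef
    have hf0 : f 0 = (Q.det.re) ^ ((1 : ℝ) / n) := by
      simp [hfdef]
    have hcont : ContinuousAt f 0 := by
      have hc1 : Continuous fun δ : ℝ => ((Q + (δ : ℂ) • 1).det).re := by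
        apply Complex.continuous_re.comp
        apply Continuous.matrix_det
        exact continuous_const.add (Complex.continuous_ofReal.smul continuous_const)
      apply ContinuousAt.rpow_const hc1.continuousAt
      right; positivity
    apply le_of_forall_pos_le_add
    intro ε hε
    have h2 : Filter.Tendsto f (nhdsWithin 0 (Set.Ioi 0)) (nhds (f 0)) :=
      hcont.continuousWithinAt
    have h3 : ∀ᶠ δ in nhdsWithin 0 (Set.Ioi 0), f δ < f 0 + ε :=
      h2.eventually_lt_const (by linarith)
    obtain ⟨δ, hlt, hδpos⟩ := (h3.and self_mem_nhdsWithin).exists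
    obtain ⟨H, h1, hdet, htr⟩ := elt_exists hn hQ hδpos
    have hmem : ((H * Q).trace).re ∈ Sset := ⟨H, h1, hdet, rfl⟩
    calc sInf Sset ≤ ((H * Q).trace).re := csInf_le hbdd hmem
    _ ≤ f δ := htr
    _ ≤ f 0 + ε := hlt.le
    _ = (Q.det.re) ^ ((1 : ℝ) / n) + ε := by rw [hf0]
end
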